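/- Let α₁, ..., αₙ be distinct complex numbers, X, Y, μ ∈ ℂ with ∏_{j=1}^n (X - α_j Y) = μ. Let i achieve the minimum of |X - α_j Y| over j. Set c_{ji} = |α_j - α_i|/2 for j ≠ i and suppose |Y| > max_{j≠i} |μ|^(1/n)/c_{ji}. Then |X - α_i Y| ≤ (|μ| / ∏_{j≠i} c_{ji}) · |Y|^{1-n}. -/

import Mathlib

theorem stmt_4 (n : ℕ) (hn : 2 ≤ n) (α : Fin n → ℂ) (hα : Function.Injective α)
    (X Y μ : ℂ) (hprod : ∏ j, (X - α j * Y) = μ) (i : Fin n)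
    (hmin : ∀ j, ‖X - α i * Y‖ ≤ ‖X - α j * Y‖)
    (hY : ∀ j, j ≠ i →
      ‖Y‖ > ‖μ‖ ^ ((1 : ℝ) / n) / (‖α j - α i‖ / 2)) :
    ‖X - α i * Y‖ ≤
      (‖μ‖ / ∏ j ∈ Finset.univ.erase i, (‖α j - α i‖ / 2)) *
        ‖Y‖ ^ ((1 : ℤ) - n) := by
  set A := ‖X - α i * Y‖ with hA
  obtain ⟨j₀, hj₀⟩ : ∃ j : Fin n, j ≠ i := by
    have : Nontrivial (Fin n) := Fin.nontrivial_iff_two_le.mpr hn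
    exact exists_ne i
  have hcpos : ∀ j : Fin n, j ≠ i → 0 < ‖α j - α i‖ / 2 := by
    intro j hj
    have : α j ≠ α i := fun h => hj (hα h)
    have : α j - α i ≠ 0 := sub_ne_zero.mpr this
    have := norm_pos_iff.mpr this
    linarith
  have hYpos : 0 < ‖Y‖ := by
    have h1 := hY j₀ hj₀
    have h2 : (0:ℝ) ≤ ‖μ‖ ^ ((1 : ℝ) / n) / (‖α j₀ - α i‖ / 2) :=
      div_nonneg (Real.rpow_nonneg (norm_nonneg _) _) (le_of_lt (hcpos j₀ hj₀))
    linarith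
  set P := ∏ j ∈ Finset.univ.erase i, (‖α j - α i‖ / 2) with hP
  have hPpos : 0 < P := Finset.prod_pos (fun j hj => hcpos j (Finset.ne_of_mem_erase hj))
  -- each factor lower bound
  have hfac : ∀ j ∈ Finset.univ.erase i,
      ‖α j - α i‖ / 2 * ‖Y‖ ≤ ‖X - α j * Y‖ := by
    intro j hj
    have h1 : ‖(α j - α i) * Y‖ ≤ A + ‖X - α j * Y‖ := by
      have he : (α j - α i) * Y = (X - α i * Y) - (X - α j * Y) := by ring
      rw [he]
      simpa using norm_sub_le (X - α i * Y) (X - α j * Y)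
    have h2 := hmin j
    have h3 : ‖(α j - α i) * Y‖ = ‖α j - α i‖ * ‖Y‖ :=
      norm_mul _ _
    nlinarith [norm_nonneg Y]
  have hmu : ‖μ‖ = A * ∏ j ∈ Finset.univ.erase i, ‖X - α j * Y‖ := by
    rw [← hprod, norm_prod]
    rw [← Finset.mul_prod_erase Finset.univ _ (Finset.mem_univ i)]
  have hprodle : P * ‖Y‖ ^ (n - 1) ≤
      ∏ j ∈ Finset.univ.erase i, ‖X - α j * Y‖ := by
    have hcard : (Finset.univ.erase i).card = n - 1 := by
      simp [Finset.card_erase_of_mem]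
    calc P * ‖Y‖ ^ (n - 1)
        = ∏ j ∈ Finset.univ.erase i, (‖α j - α i‖ / 2 * ‖Y‖) := by
          rw [Finset.prod_mul_distrib, Finset.prod_const, hcard]
      _ ≤ ∏ j ∈ Finset.univ.erase i, ‖X - α j * Y‖ :=
          Finset.prod_le_prod
            (fun j hj => mul_nonneg (le_of_lt (hcpos j (Finset.ne_of_mem_erase hj)))
              (norm_nonneg Y)) hfac
  have hmain : A * (P * ‖Y‖ ^ (n - 1)) ≤ ‖μ‖ := by
    rw [hmu]
    exact mul_le_mul_of_nonneg_left hprodle (norm_nonneg _)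
  have hpow : ‖Y‖ ^ ((1 : ℤ) - n) = (‖Y‖ ^ (n - 1))⁻¹ := by
    have h1 : ((1 : ℤ) - n) = -((n - 1 : ℕ) : ℤ) := by
      have : 1 ≤ n := by omega
      push_cast [Nat.cast_sub this]
      ring
    rw [h1, zpow_neg, zpow_natCast]
  have hpos : 0 < P * ‖Y‖ ^ (n - 1) := mul_pos hPpos (pow_pos hYpos _)
  have hfin : A ≤ ‖μ‖ / (P * ‖Y‖ ^ (n - 1)) := (le_div_iff₀ hpos).mpr hmain
  rw [hpow]
  calc A ≤ ‖μ‖ / (P * ‖Y‖ ^ (n - 1)) := hfin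
    _ = ‖μ‖ / P * (‖Y‖ ^ (n - 1))⁻¹ := by
        rw [← div_div, div_eq_mul_inv]
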